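/- For a > 0, let f_a(r) = √(r⁴+a²) − a·log((√(r⁴+a²)+a)/r²) for r > 0, and set G_a(r) = f_a(r) − r². Then lim_{r→∞} r² · G_a(r) = −a²/2. In particular G_a(r) = O(r^{-2}) as r → ∞. -/

import Mathlib

open Filter Asymptotics

/-- The Eguchi–Hanson Kähler potential `f_a(r) = √(r⁴+a²) − a·log((√(r⁴+a²)+a)/r²)`. -/
noncomputable def fEH (a r : ℝ) : ℝ :=
  Real.sqrt (r ^ 4 + a ^ 2) - a * Real.log ((Real.sqrt (r ^ 4 + a ^ 2) + a) / r ^ 2)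

/-- With `G_a(r) = f_a(r) − r²`, one has `lim_{r→∞} r²·G_a(r) = −a²/2`;
in particular `G_a(r) = O(r^{-2})` as `r → ∞`. -/
theorem stmt7 (a : ℝ) (ha : 0 < a) :
    Tendsto (fun r : ℝ => r ^ 2 * (fEH a r - r ^ 2)) atTop (nhds (-(a ^ 2) / 2)) ∧
    (fun r : ℝ => fEH a r - r ^ 2) =O[atTop] fun r : ℝ => (r ^ 2)⁻¹ := by
  set u : ℝ → ℝ := fun r => Real.sqrt (r ^ 4 + a ^ 2) with hu
  have hunn : ∀ r : ℝ, 0 ≤ u r := fun r => Real.sqrt_nonneg _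
  have husq : ∀ r : ℝ, u r ^ 2 = r ^ 4 + a ^ 2 := fun r => Real.sq_sqrt (by positivity)
  have hur : ∀ r : ℝ, r ^ 2 ≤ u r := by
    intro r
    have h1 : r ^ 2 = Real.sqrt (r ^ 4) := by
      rw [show (r:ℝ) ^ 4 = (r ^ 2) ^ 2 by ring, Real.sqrt_sq (sq_nonneg r)]
    rw [h1]
    exact Real.sqrt_le_sqrt (by nlinarith)
  have hr2 : Tendsto (fun r : ℝ => r ^ 2) atTop atTop :=
    tendsto_pow_atTop two_ne_zero
  have hr4 : Tendsto (fun r : ℝ => r ^ 4) atTop atTop :=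
    tendsto_pow_atTop four_ne_zero
  -- u r / r^2 → 1
  have hw : Tendsto (fun r : ℝ => u r / r ^ 2) atTop (nhds 1) := by
    have hinner : Tendsto (fun r : ℝ => 1 + a ^ 2 / r ^ 4) atTop (nhds (1 + 0)) :=
      tendsto_const_nhds.add (Tendsto.div_atTop tendsto_const_nhds hr4)
    have hsq : Tendsto (fun r : ℝ => Real.sqrt (1 + a ^ 2 / r ^ 4)) atTop (nhds 1) := by
      have := (Real.continuous_sqrt.tendsto (1 + 0)).comp hinner
      simpa [Function.comp_def] using this
    refine hsq.congr' ?_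
    filter_upwards [eventually_gt_atTop (0:ℝ)] with r hr
    have h4 : (0:ℝ) < r ^ 4 := by positivity
    have h1 : (1:ℝ) + a ^ 2 / r ^ 4 = (r ^ 4 + a ^ 2) / r ^ 4 := by field_simp
    rw [h1, Real.sqrt_div (by positivity),
      show Real.sqrt (r ^ 4) = r ^ 2 by
        rw [show (r:ℝ) ^ 4 = (r ^ 2) ^ 2 by ring, Real.sqrt_sq (sq_nonneg r)]]
  -- term A : r^2 * (u r - r^2) → a^2/2
  have hA : Tendsto (fun r : ℝ => r ^ 2 * (u r - r ^ 2)) atTop (nhds (a ^ 2 / 2)) := by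
    have h2 : Tendsto (fun r : ℝ => a ^ 2 / (u r / r ^ 2 + 1)) atTop
        (nhds (a ^ 2 / (1 + 1))) :=
      tendsto_const_nhds.div (hw.add tendsto_const_nhds) (by norm_num)
    have h3 : Tendsto (fun r : ℝ => a ^ 2 / (u r / r ^ 2 + 1)) atTop (nhds (a ^ 2 / 2)) := by
      convert h2 using 2; norm_num
    refine h3.congr' ?_
    filter_upwards [eventually_gt_atTop (0:ℝ)] with r hr
    have h2r : (0:ℝ) < r ^ 2 := by positivity
    have hup : (0:ℝ) < u r + r ^ 2 := by nlinarith [hur r]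
    have hid : (u r - r ^ 2) * (u r + r ^ 2) = a ^ 2 := by nlinarith [husq r]
    field_simp
    nlinarith [husq r]
  -- ρ r = (u r + a) / r^2 → 1 within (≠ 1)
  have hρ1 : Tendsto (fun r : ℝ => (u r + a) / r ^ 2) atTop (nhds 1) := by
    have : Tendsto (fun r : ℝ => u r / r ^ 2 + a / r ^ 2) atTop (nhds (1 + 0)) :=
      hw.add (Tendsto.div_atTop tendsto_const_nhds hr2)
    simpa [add_div] using this
  have hρne : ∀ᶠ r : ℝ in atTop, (u r + a) / r ^ 2 ≠ 1 := by
    filter_upwards [eventually_gt_atTop (0:ℝ)] with r hr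
    have h2r : (0:ℝ) < r ^ 2 := by positivity
    have : (1:ℝ) < (u r + a) / r ^ 2 := by
      rw [lt_div_iff₀ h2r]; nlinarith [hur r]
    exact ne_of_gt this
  have hρ : Tendsto (fun r : ℝ => (u r + a) / r ^ 2) atTop (nhdsWithin 1 {x | x ≠ 1}) := by
    rw [tendsto_nhdsWithin_iff]
    exact ⟨hρ1, hρne⟩
  -- slope of log at 1
  have hslope : Tendsto (fun x : ℝ => Real.log x / (x - 1)) (nhdsWithin 1 {x | x ≠ 1})
      (nhds 1) := by
    have h := hasDerivAt_iff_tendsto_slope.mp (Real.hasDerivAt_log one_ne_zero)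
    simp only [slope_def_field, Real.log_one, inv_one] at h
    refine h.congr fun x => ?_
    simp [slope_def_field, div_eq_div_iff]
  have hslope' : Tendsto (fun r : ℝ =>
      Real.log ((u r + a) / r ^ 2) / ((u r + a) / r ^ 2 - 1)) atTop (nhds 1) :=
    hslope.comp hρ
  -- r^2 * (ρ r - 1) = u r + a - r^2 → a
  have hC : Tendsto (fun r : ℝ => r ^ 2 * ((u r + a) / r ^ 2 - 1)) atTop (nhds a) := by
    have hd : Tendsto (fun r : ℝ => a ^ 2 / (u r + r ^ 2)) atTop (nhds 0) := by
      refine Tendsto.div_atTop tendsto_const_nhds ?_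
      refine tendsto_atTop_mono (fun r => ?_) hr2
      nlinarith [hur r, hunn r]
    have : Tendsto (fun r : ℝ => a ^ 2 / (u r + r ^ 2) + a) atTop (nhds (0 + a)) :=
      hd.add tendsto_const_nhds
    rw [zero_add] at this
    refine this.congr' ?_
    filter_upwards [eventually_gt_atTop (0:ℝ)] with r hr
    have h2r : (0:ℝ) < r ^ 2 := by positivity
    have hup : (0:ℝ) < u r + r ^ 2 := by nlinarith [hur r]
    field_simp
    nlinarith [husq r]
  -- term B : r^2 * log ρ → a
  have hB : Tendsto (fun r : ℝ => r ^ 2 * Real.log ((u r + a) / r ^ 2)) atTop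
      (nhds a) := by
    have := hC.mul hslope'
    rw [mul_one] at this
    refine this.congr' ?_
    filter_upwards [hρne, eventually_gt_atTop (0:ℝ)] with r hne hr
    have hne' : (u r + a) / r ^ 2 - 1 ≠ 0 := sub_ne_zero.mpr hne
    rw [mul_assoc, mul_comm ((u r + a) / r ^ 2 - 1),
      div_mul_cancel₀ _ hne']
  -- combine
  have key : Tendsto (fun r : ℝ => r ^ 2 * (fEH a r - r ^ 2)) atTop (nhds (-(a ^ 2) / 2)) := by
    have h := hA.sub (hB.const_mul a)
    have heq : a ^ 2 / 2 - a * a = -(a ^ 2) / 2 := by ring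
    rw [heq] at h
    refine h.congr fun r => ?_
    simp only [fEH, hu]
    ring
  refine ⟨key, ?_⟩
  have hbig : (fun r : ℝ => r ^ 2 * (fEH a r - r ^ 2)) =O[atTop] (fun _ => (1:ℝ)) :=
    key.isBigO_one ℝ
  have h2 : (fun r : ℝ => (r ^ 2)⁻¹ * (r ^ 2 * (fEH a r - r ^ 2))) =O[atTop]
      (fun r : ℝ => (r ^ 2)⁻¹ * 1) :=
    (isBigO_refl (fun r : ℝ => (r ^ 2)⁻¹) atTop).mul hbig
  refine h2.congr' ?_ ?_
  · filter_upwards [eventually_ne_atTop (0:ℝ)] with r hr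
    have : (r:ℝ) ^ 2 ≠ 0 := pow_ne_zero _ hr
    field_simp
  · filter_upwards with r
    rw [mul_one]
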